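/- For a 2×2 complex matrix T = [[a, d], [c, b]], the operator norm of T equals (√(r+s) + √(r−s))/2, where r = |a|² + |b|² + |c|² + |d|² and s = 2|ab − cd|. -/

import Mathlib

open Matrix Complex

lemma normT_sq (a b c d : ℂ) (x : EuclideanSpace ℂ (Fin 2)) :
    ‖toEuclideanCLM (𝕜:=ℂ) !![a,d;c,b] x‖^2
      = ‖a * x 0 + d * x 1‖^2 + ‖c * x 0 + b * x 1‖^2 := by
  rw [EuclideanSpace.norm_eq, Real.sq_sqrt (by positivity)]
  have h : ∀ i, (toEuclideanCLM (𝕜:=ℂ) !![a,d;c,b]) x i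
      = (!![a,d;c,b]).mulVec (fun j => x j) i := fun _ => rfl
  simp [Fin.sum_univ_two, h, Matrix.mulVec, dotProduct]

lemma lower_aux (a b c d x1 x2 : ℂ) (M : ℝ) (hM : 0 ≤ M)
    (hx : ‖x1‖ ^2 + ‖x2‖ ^2 ≠ 0)
    (hQ : ‖a*x1+d*x2‖^2 + ‖c*x1+b*x2‖^2
        = M^2 * (‖x1‖ ^2 + ‖x2‖ ^2)) :
    M ≤ ‖toEuclideanCLM (𝕜:=ℂ) !![a,d;c,b]‖ := by
  set T := toEuclideanCLM (𝕜:=ℂ) !![a,d;c,b] with hT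
  set x : EuclideanSpace ℂ (Fin 2) := (WithLp.equiv 2 _).symm ![x1, x2] with hxdef
  have hx0 : x 0 = x1 := rfl
  have hx1 : x 1 = x2 := rfl
  have hnx : ‖x‖^2 = ‖x1‖ ^2 + ‖x2‖ ^2 := by
    rw [EuclideanSpace.norm_eq, Real.sq_sqrt (by positivity)]
    simp [Fin.sum_univ_two, hx0, hx1]
  have hTx2 : ‖T x‖^2 = (M * ‖x‖)^2 := by
    rw [normT_sq a b c d x, hx0, hx1, hQ, ← hnx]; ring
  have hxpos : 0 < ‖x‖ := by
    rcases (norm_nonneg x).lt_or_eq with h | h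
    · exact h
    · exact absurd (by rw [← hnx, ← h]; ring) hx
  have hTx : ‖T x‖ = M * ‖x‖ := by
    have := congrArg Real.sqrt hTx2
    rwa [Real.sqrt_sq (norm_nonneg _), Real.sqrt_sq (by positivity)] at this
  have hle := T.le_opNorm x
  rw [hTx] at hle
  exact le_of_mul_le_mul_right hle hxpos

lemma upper_aux (a b c d : ℂ) (M : ℝ) (hM : 0 ≤ M)
    (h : ∀ x1 x2 : ℂ, ‖a*x1+d*x2‖^2 + ‖c*x1+b*x2‖^2
      ≤ M^2 * (‖x1‖^2 + ‖x2‖^2)) :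
    ‖toEuclideanCLM (𝕜:=ℂ) !![a,d;c,b]‖ ≤ M := by
  apply ContinuousLinearMap.opNorm_le_bound _ hM
  intro x
  have hnx : ‖x‖^2 = ‖x 0‖^2 + ‖x 1‖^2 := by
    rw [EuclideanSpace.norm_eq, Real.sq_sqrt (by positivity)]
    simp [Fin.sum_univ_two]
  have h2 : ‖toEuclideanCLM (𝕜:=ℂ) !![a,d;c,b] x‖^2 ≤ (M * ‖x‖)^2 := by
    rw [normT_sq a b c d x, mul_pow, hnx]
    exact h (x 0) (x 1)
  calc ‖toEuclideanCLM (𝕜:=ℂ) !![a,d;c,b] x‖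
      = Real.sqrt (‖toEuclideanCLM (𝕜:=ℂ) !![a,d;c,b] x‖^2) := (Real.sqrt_sq (norm_nonneg _)).symm
    _ ≤ Real.sqrt ((M * ‖x‖)^2) := Real.sqrt_le_sqrt h2
    _ = M * ‖x‖ := Real.sqrt_sq (by positivity)

lemma key_id (a b c d x1 x2 : ℂ) :
    ‖a*x1+d*x2‖^2 + ‖c*x1+b*x2‖^2
    = (‖a‖^2 + ‖c‖^2) * ‖x1‖^2
      + (‖d‖^2 + ‖b‖^2) * ‖x2‖^2
      + 2 * ((starRingEnd ℂ a * d + starRingEnd ℂ c * b) * (starRingEnd ℂ x1) * x2).re := by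
  simp only [Complex.sq_norm, Complex.normSq_apply, Complex.mul_re, Complex.mul_im,
    Complex.add_re, Complex.add_im, Complex.conj_re, Complex.conj_im]
  ring

lemma det_id (a b c d : ℂ) :
    ‖a*b - c*d‖^2 + ‖starRingEnd ℂ a * d + starRingEnd ℂ c * b‖^2
    = (‖a‖^2 + ‖c‖^2) * (‖d‖^2 + ‖b‖^2) := by
  simp only [Complex.sq_norm, Complex.normSq_apply, Complex.mul_re, Complex.mul_im,
    Complex.add_re, Complex.add_im, Complex.sub_re, Complex.sub_im,
    Complex.conj_re, Complex.conj_im]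
  ring

lemma real_upper (p q W u v lam : ℝ) (hW : 0 ≤ W)
    (hp : p ≤ lam) (hq : q ≤ lam) (h : (lam - p)*(lam - q) = W^2) :
    p*u^2 + q*v^2 + 2*(W*(u*v)) ≤ lam*(u^2+v^2) := by
  have h1 : Real.sqrt (lam-p) * Real.sqrt (lam-q) = W := by
    rw [← Real.sqrt_mul (by linarith), h, Real.sqrt_sq hW]
  have h2 := sq_nonneg (Real.sqrt (lam-p)*u - Real.sqrt (lam-q)*v)
  have e : (Real.sqrt (lam-p)*u - Real.sqrt (lam-q)*v)^2
      = Real.sqrt (lam-p)^2*u^2 + Real.sqrt (lam-q)^2*v^2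
        - 2*(Real.sqrt (lam-p)*Real.sqrt (lam-q))*(u*v) := by ring
  rw [Real.sq_sqrt (sub_nonneg.2 hp), Real.sq_sqrt (sub_nonneg.2 hq), h1] at e
  rw [e] at h2; linarith
set_option maxHeartbeats 2000000 in
theorem stmt_0 (a b c d : ℂ) (r s : ℝ)
    (hr : r = ‖a‖ ^ 2 + ‖b‖ ^ 2 + ‖c‖ ^ 2 + ‖d‖ ^ 2)
    (hs : s = 2 * ‖a * b - c * d‖) :
    ‖Matrix.toEuclideanCLM (𝕜 := ℂ) (!![a, d; c, b])‖ =
      (Real.sqrt (r + s) + Real.sqrt (r - s)) / 2 := by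
  set p : ℝ := ‖a‖^2 + ‖c‖^2 with hpdef
  set q : ℝ := ‖d‖^2 + ‖b‖^2 with hqdef
  set w : ℂ := starRingEnd ℂ a * d + starRingEnd ℂ c * b with hwdef
  set W : ℝ := ‖w‖ with hWdef
  have hW0 : 0 ≤ W := norm_nonneg w
  have hs0 : 0 ≤ s := by rw [hs]; positivity
  have hrpq : r = p + q := by rw [hr, hpdef, hqdef]; ring
  have hdet : ‖a*b - c*d‖^2 + W^2 = p*q := by
    rw [hpdef, hqdef, hWdef, hwdef]; exact det_id a b c d
  have hs2 : s^2 = 4*(p*q - W^2) := by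
    rw [hs]; linear_combination 4*hdet
  have hrs : s ≤ r := by
    have h1 : ‖a*b - c*d‖ ≤ ‖a‖ * ‖b‖
        + ‖c‖ * ‖d‖ := by
      calc ‖a*b - c*d‖ = ‖a*b + -(c*d)‖ := by ring_nf
        _ ≤ ‖a*b‖ + ‖-(c*d)‖ := norm_add_le _ _
        _ = ‖a‖ * ‖b‖ + ‖c‖ * ‖d‖ := by
            rw [norm_neg, norm_mul, norm_mul]
    rw [hr, hs]
    linarith [h1, two_mul_le_add_sq (‖a‖) (‖b‖),
      two_mul_le_add_sq (‖c‖) (‖d‖)]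
  set D : ℝ := Real.sqrt (r^2 - s^2) with hDdef
  have hD0 : 0 ≤ D := Real.sqrt_nonneg _
  have hD2 : D^2 = r^2 - s^2 := Real.sq_sqrt (by
    have h := mul_nonneg (sub_nonneg.2 hrs) (show (0:ℝ) ≤ r + s by linarith)
    have h2 : (r - s) * (r + s) = r^2 - s^2 := by ring
    linarith)
  have hD2' : D^2 = (p-q)^2 + 4*W^2 := by
    rw [hD2]; linear_combination (r+p+q)*hrpq - hs2
  set M : ℝ := (Real.sqrt (r + s) + Real.sqrt (r - s)) / 2 with hMdef
  have hM0 : 0 ≤ M := by positivity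
  have e1 : Real.sqrt (r+s) * Real.sqrt (r-s) = D := by
    rw [← Real.sqrt_mul (by linarith)]; rw [hDdef]; congr 1; ring
  have hM2 : M^2 = (r + D)/2 := by
    have h1 := Real.sq_sqrt (show (0:ℝ) ≤ r+s by linarith)
    have h2 := Real.sq_sqrt (show (0:ℝ) ≤ r-s by linarith)
    rw [hMdef]
    rw [show ((Real.sqrt (r+s) + Real.sqrt (r-s))/2)^2
      = (Real.sqrt (r+s)^2 + Real.sqrt (r-s)^2 + 2*(Real.sqrt (r+s)*Real.sqrt (r-s)))/4 by ring,
      e1, h1, h2]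
    ring
  have hDpq : |p - q| ≤ D := by
    have h : (p-q)^2 ≤ D^2 := by rw [hD2']; linarith [sq_nonneg W]
    calc |p-q| = Real.sqrt ((p-q)^2) := (Real.sqrt_sq_eq_abs _).symm
      _ ≤ Real.sqrt (D^2) := Real.sqrt_le_sqrt h
      _ = D := Real.sqrt_sq hD0
  have hplam : p ≤ M^2 := by
    rw [hM2, hrpq]; have := le_abs_self (p - q); linarith
  have hqlam : q ≤ M^2 := by
    rw [hM2, hrpq]; have := neg_abs_le (p - q); linarith
  have hprod : (M^2 - p)*(M^2 - q) = W^2 := by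
    rw [hM2, hrpq]; linear_combination (1/4)*hD2'
  apply le_antisymm
  · -- upper bound
    apply upper_aux a b c d M hM0
    intro x1 x2
    rw [key_id a b c d x1 x2]
    have hre : ((starRingEnd ℂ a * d + starRingEnd ℂ c * b) * starRingEnd ℂ x1 * x2).re
        ≤ W * (‖x1‖ * ‖x2‖) := by
      calc ((starRingEnd ℂ a * d + starRingEnd ℂ c * b) * starRingEnd ℂ x1 * x2).re
          ≤ ‖(starRingEnd ℂ a * d + starRingEnd ℂ c * b) * starRingEnd ℂ x1 * x2‖ :=
            Complex.re_le_norm _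
        _ = W * (‖x1‖ * ‖x2‖) := by
            rw [norm_mul, norm_mul, Complex.norm_conj, hWdef, hwdef]; ring
    have hup := real_upper p q W (‖x1‖) (‖x2‖) (M^2) hW0 hplam hqlam hprod
    rw [hpdef, hqdef] at hup
    linarith
  · -- lower bound
    by_cases hWz : W = 0
    · have h0 : (M^2 - p)*(M^2 - q) = 0 := by rw [hprod, hWz]; ring
      rcases mul_eq_zero.1 h0 with h | h
      · rw [hpdef] at h
        apply lower_aux a b c d 1 0 M hM0 (by simp)
        simp only [mul_one, mul_zero, add_zero, zero_add, map_zero, norm_one, norm_zero, one_pow, zero_pow two_ne_zero]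
        linarith [h]
      · rw [hqdef] at h
        apply lower_aux a b c d 0 1 M hM0 (by simp)
        simp only [mul_one, mul_zero, add_zero, zero_add, map_zero, norm_one, norm_zero, one_pow, zero_pow two_ne_zero]
        linarith [h]
    · have hWpos : 0 < W := lt_of_le_of_ne hW0 (Ne.symm hWz)
      set u : ℝ := Real.sqrt (M^2 - q) with hudef
      set v : ℝ := Real.sqrt (M^2 - p) with hvdef
      have hu0 : 0 ≤ u := Real.sqrt_nonneg _
      have hv0 : 0 ≤ v := Real.sqrt_nonneg _
      have hu2 : u^2 = M^2 - q := Real.sq_sqrt (by linarith)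
      have hv2 : v^2 = M^2 - p := Real.sq_sqrt (by linarith)
      have hWuv : W = u * v := by
        have h1 : W^2 = (u*v)^2 := by rw [← hprod, ← hu2, ← hv2]; ring
        have h2 := congrArg Real.sqrt h1
        rwa [Real.sqrt_sq hW0, Real.sqrt_sq (by positivity)] at h2
      have hax1 : ‖((u:ℝ):ℂ)‖ = u := by
        rw [Complex.norm_real, Real.norm_eq_abs, _root_.abs_of_nonneg hu0]
      have hax2 : ‖((v/W : ℝ):ℂ) * starRingEnd ℂ w‖ = v := by
        rw [norm_mul, Complex.norm_conj, Complex.norm_real, Real.norm_eq_abs,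
          _root_.abs_of_nonneg (by positivity), ← hWdef]
        field_simp
      have huv0 : u^2 + v^2 ≠ 0 := by
        intro h
        have hu' : u = 0 := pow_eq_zero_iff two_ne_zero |>.mp
          (le_antisymm (by linarith [sq_nonneg v]) (sq_nonneg u))
        have hv' : v = 0 := pow_eq_zero_iff two_ne_zero |>.mp
          (le_antisymm (by linarith [sq_nonneg u]) (sq_nonneg v))
        rw [hWuv, hu', hv'] at hWpos; simp at hWpos
      apply lower_aux a b c d (u : ℂ) (((v/W : ℝ) : ℂ) * starRingEnd ℂ w) M hM0
      · rw [hax1, hax2]; exact huv0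
      · rw [key_id, hax1, hax2]
        have hre : ((starRingEnd ℂ a * d + starRingEnd ℂ c * b) * starRingEnd ℂ ((u:ℝ):ℂ)
            * (((v/W : ℝ):ℂ) * starRingEnd ℂ w)).re = u * v * W := by
          rw [← hwdef, Complex.conj_ofReal]
          rw [show w * ((u:ℝ):ℂ) * (((v/W : ℝ):ℂ) * starRingEnd ℂ w)
            = (((u:ℝ):ℂ) * ((v/W : ℝ):ℂ)) * (w * starRingEnd ℂ w) by ring]
          rw [Complex.mul_conj]
          rw [show (((u:ℝ):ℂ) * ((v/W : ℝ):ℂ)) * ((Complex.normSq w : ℝ):ℂ)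
            = (((u * (v/W) * Complex.normSq w : ℝ)):ℂ) by push_cast; ring]
          rw [Complex.ofReal_re, ← Complex.sq_norm, ← hWdef]
          field_simp
        rw [hre, ← hpdef, ← hqdef]
        linear_combination u^2*hv2 + v^2*hu2 + 2*u*v*hWuv
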